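/- Every positive integer m can be written uniquely in r-cascade notation: m = C(a_r, r) + C(a_{r-1}, r-1) + ... + C(a_s, s), where r ≥ s ≥ 1, a_r > a_{r-1} > ... > a_s > 0 and a_i ≥ i for all i in [s, r]. -/

import Mathlib

/-- A family of finsets that is a chain under inclusion. -/
def IsChainF (C : Finset (Finset ℕ)) : Prop :=
  ∀ A ∈ C, ∀ B ∈ C, A ⊆ B ∨ B ⊆ A

/-- A skipless chain: a chain in which every cardinality between those of two
members is attained by some member. -/
def SkiplessChain (C : Finset (Finset ℕ)) : Prop :=
  IsChainF C ∧ ∀ A ∈ C, ∀ B ∈ C, ∀ k : ℕ, A.card ≤ k → k ≤ B.card → ∃ D ∈ C, D.card = k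

/-- The maximum size of a matching between a family `𝒜` and its shadow in the
containment bipartite graph. -/
noncomputable def nu (𝒜 : Finset (Finset ℕ)) : ℕ :=
  sSup {m | ∃ s ⊆ 𝒜, s.card = m ∧ ∃ f : Finset ℕ → Finset ℕ,
    Set.InjOn f ↑s ∧ ∀ a ∈ s, f a ∈ Finset.shadow 𝒜 ∧ f a ⊆ a}

/-- The initial segment of the colexicographic order on `t`-element subsets of ℕ
of size `m`. -/
def colexSeg (m t : ℕ) : Finset (Finset ℕ) :=
  ((Finset.range (t + m)).powerset).filter (fun S => S.card = t ∧
    (((Finset.range (t + m)).powerset).filter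
      (fun B => B.card = t ∧ toColex B < toColex S)).card < m)

/-- `F` is a `k`-antichain saturated family of subsets of `[n] = {0, …, n-1}`. -/
def AntichainSat (n k : ℕ) (F : Finset (Finset ℕ)) : Prop :=
  (∀ X ∈ F, X ⊆ Finset.range n) ∧
  (¬ ∃ 𝒜 ⊆ F, 𝒜.card = k ∧ IsAntichain (· ⊆ ·) (𝒜 : Set (Finset ℕ))) ∧
  (∀ X : Finset ℕ, X ⊆ Finset.range n → X ∉ F →
    ∃ 𝒜 ⊆ insert X F, 𝒜.card = k ∧ IsAntichain (· ⊆ ·) (𝒜 : Set (Finset ℕ)))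

/-- The antichain saturation number `sat*(n, k)`. -/
noncomputable def satStar (n k : ℕ) : ℕ :=
  sInf {m | ∃ F : Finset (Finset ℕ), AntichainSat n k F ∧ F.card = m}

noncomputable def cAux (k ℓ : ℕ) : ℕ → ℕ
  | 0 => k - 1
  | d + 1 => nu (colexSeg (cAux k ℓ d) (ℓ / 2 - d))

/-- The sequence `c_t` from the paper: `c_t = k - 1` for `t ≥ ⌊ℓ/2⌋` and
`c_t = ν(C(c_{t+1}, t+1))` for `t < ⌊ℓ/2⌋`. -/
noncomputable def cseq (k ℓ t : ℕ) : ℕ :=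
  if ℓ / 2 ≤ t then k - 1 else cAux k ℓ (ℓ / 2 - t)

open Finset

private lemma choose_strict_aux {n k : ℕ} (hk : 1 ≤ k) (hn : k ≤ n) :
    n.choose k < (n + 1).choose k := by
  obtain ⟨j, rfl⟩ : ∃ j, k = j + 1 := ⟨k - 1, by omega⟩
  rw [Nat.choose_succ_succ']
  have : 0 < n.choose j := Nat.choose_pos (by omega)
  omega

private lemma choose_strict {a b k : ℕ} (hk : 1 ≤ k) (ha : k ≤ a) (hab : a < b) :
    a.choose k < b.choose k :=
  lt_of_lt_of_le (choose_strict_aux hk ha) (Nat.choose_mono k (by omega))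

private lemma le_choose {r a : ℕ} (hr : 1 ≤ r) (h : r ≤ a) : a + 1 - r ≤ a.choose r := by
  induction a, h using Nat.le_induction with
  | base => simp
  | succ n hn ih =>
    rw [show n + 1 = (n) + 1 from rfl]
    obtain ⟨j, rfl⟩ : ∃ j, r = j + 1 := ⟨r - 1, by omega⟩
    rw [Nat.choose_succ_succ']
    have h1 : 0 < n.choose j := Nat.choose_pos (by omega)
    omega

/-- Key bound: a cascade sum with top term `C(a r, r)` is less than `C(a r + 1, r)`. -/
private lemma sum_lt_choose :
    ∀ r s (a : ℕ → ℕ), 1 ≤ s → s ≤ r →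
      (∀ i ∈ Icc s r, i ≤ a i) →
      (∀ i ∈ Icc s r, ∀ j ∈ Icc s r, i < j → a i < a j) →
      ∑ i ∈ Icc s r, Nat.choose (a i) i < (a r + 1).choose r := by
  intro r
  induction r with
  | zero => intro s a hs hsr; omega
  | succ r ih =>
    intro s a hs hsr hge hmono
    rcases eq_or_lt_of_le hsr with heq | hlt
    · subst heq
      rw [Icc_self, sum_singleton]
      exact choose_strict_aux hs (hge _ (by simp))
    · have hsr' : s ≤ r := by omega
      rw [Finset.sum_Icc_succ_top (by omega)]
      have h1 : ∑ i ∈ Icc s r, Nat.choose (a i) i < (a r + 1).choose r :=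
        ih s a hs hsr' (fun i hi => hge i (by simp at hi ⊢; omega))
          (fun i hi j hj hij => hmono i (by simp at hi ⊢; omega) j (by simp at hj ⊢; omega) hij)
      have h2 : a r + 1 ≤ a (r + 1) := by
        have := hmono r (by simp; omega) (r + 1) (by simp; omega) (by omega)
        omega
      have h3 : (a r + 1).choose r ≤ (a (r + 1)).choose r := Nat.choose_mono r h2
      have h4 : (a (r + 1) + 1).choose (r + 1) =
          (a (r + 1)).choose r + (a (r + 1)).choose (r + 1) := Nat.choose_succ_succ' _ _
      omega

private def CascadeRep (r s : ℕ) (a : ℕ → ℕ) (m : ℕ) : Prop :=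
  1 ≤ s ∧ s ≤ r ∧ (∀ i ∈ Icc s r, i ≤ a i) ∧
    (∀ i ∈ Icc s r, ∀ j ∈ Icc s r, i < j → a i < a j) ∧
    m = ∑ i ∈ Icc s r, Nat.choose (a i) i

private lemma exists_rep : ∀ r, 1 ≤ r → ∀ m, 0 < m → ∃ s a, CascadeRep r s a m := by
  intro r hr
  induction r, hr using Nat.le_induction with
  | base =>
    intro m hm
    refine ⟨1, fun _ => m, le_refl 1, le_refl 1, ?_, ?_, ?_⟩
    · intro i hi; simp only [Finset.mem_Icc] at hi; show i ≤ m; omega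
    · intro i hi j hj hij; simp only [Finset.mem_Icc] at hi hj
      exact absurd hij (by omega)
    · rw [Icc_self, sum_singleton]; show m = Nat.choose m 1; simp
  | succ r hr ih =>
    intro m hm
    set P : ℕ → Prop := fun x => x.choose (r + 1) ≤ m with hP
    have hPdec : DecidablePred P := fun _ => inferInstanceAs (Decidable (_ ≤ _))
    set A := Nat.findGreatest P (m + r + 1) with hA
    have hAr : r + 1 ≤ A :=
      Nat.le_findGreatest (by omega) (by simp [hP, Nat.choose_self]; omega)
    have hAle : P A := Nat.findGreatest_spec (P := P) (m := r + 1) (by omega)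
        (by simp [hP, Nat.choose_self]; omega)
    have hAm : A.choose (r + 1) ≤ m := hAle
    have hAgt : m < (A + 1).choose (r + 1) := by
      by_cases hcase : A + 1 ≤ m + r + 1
      · have := Nat.findGreatest_is_greatest (P := P) (n := m + r + 1) (k := A + 1)
          (by omega) hcase
        simpa [hP, not_le] using this
      · have hAeq : A = m + r + 1 := le_antisymm (Nat.findGreatest_le _) (by omega)
        have := le_choose (r := r + 1) (a := A + 1) (by omega) (by omega)
        omega
    have hsplit : (A + 1).choose (r + 1) = A.choose r + A.choose (r + 1) :=
      Nat.choose_succ_succ' _ _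
    set m' := m - A.choose (r + 1) with hm'
    have hm'lt : m' < A.choose r := by omega
    by_cases hz : m' = 0
    · refine ⟨r + 1, fun _ => A, by omega, le_refl _, ?_, ?_, ?_⟩
      · intro i hi; simp only [Finset.mem_Icc] at hi; show i ≤ A; omega
      · intro i hi j hj hij; simp only [Finset.mem_Icc] at hi hj
        exact absurd hij (by omega)
      · rw [Icc_self, sum_singleton]; show m = A.choose (r + 1); omega
    · obtain ⟨s, a0, hs1, hsr, hge, hmono, hsum⟩ := ih m' (by omega)
      have hterm : Nat.choose (a0 r) r ≤ m' := by
        rw [hsum]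
        exact Finset.single_le_sum (f := fun i => Nat.choose (a0 i) i)
          (fun i _ => Nat.zero_le _) (Finset.mem_Icc.mpr ⟨hsr, le_refl r⟩)
      have ha0r : a0 r < A := by
        by_contra hcon
        have : A.choose r ≤ (a0 r).choose r := Nat.choose_mono r (by omega)
        omega
      refine ⟨s, fun i => if i = r + 1 then A else a0 i, hs1, by omega, ?_, ?_, ?_⟩
      · intro i hi; simp only [Finset.mem_Icc] at hi
        show i ≤ if i = r + 1 then A else a0 i
        by_cases h : i = r + 1
        · rw [if_pos h]; omega
        · rw [if_neg h]; exact hge i (Finset.mem_Icc.mpr ⟨hi.1, by omega⟩)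
      · intro i hi j hj hij; simp only [Finset.mem_Icc] at hi hj
        show (if i = r + 1 then A else a0 i) < (if j = r + 1 then A else a0 j)
        have hi1 : i ≠ r + 1 := by omega
        rw [if_neg hi1]
        by_cases hj1 : j = r + 1
        · rw [if_pos hj1]
          rcases eq_or_lt_of_le (show i ≤ r by omega) with h | h
          · rw [h]; exact ha0r
          · have := hmono i (Finset.mem_Icc.mpr ⟨hi.1, by omega⟩)
              r (Finset.mem_Icc.mpr ⟨by omega, le_refl r⟩) h
            omega
        · rw [if_neg hj1]
          exact hmono i (Finset.mem_Icc.mpr ⟨hi.1, by omega⟩)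
            j (Finset.mem_Icc.mpr ⟨hj.1, by omega⟩) hij
      · show m = ∑ i ∈ Icc s (r + 1), Nat.choose (if i = r + 1 then A else a0 i) i
        rw [Finset.sum_Icc_succ_top (show s ≤ r + 1 by omega)]
        have h1 : Nat.choose (if r + 1 = r + 1 then A else a0 (r + 1)) (r + 1)
            = A.choose (r + 1) := by rw [if_pos rfl]
        have h2 : ∑ i ∈ Icc s r, Nat.choose (if i = r + 1 then A else a0 i) i
            = ∑ i ∈ Icc s r, Nat.choose (a0 i) i := by
          apply Finset.sum_congr rfl
          intro i hi; simp only [Finset.mem_Icc] at hi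
          rw [if_neg (by omega)]
        rw [h1, h2, ← hsum]
        omega

private lemma unique_rep : ∀ r, 1 ≤ r → ∀ m, 0 < m → ∀ s a s' a',
    CascadeRep r s a m → CascadeRep r s' a' m → s = s' ∧ ∀ i ∈ Icc s r, a i = a' i := by
  intro r hr
  induction r, hr using Nat.le_induction with
  | base =>
    intro m hm s a s' a' ⟨hs1, hsr, hge, hmono, hsum⟩ ⟨hs1', hsr', hge', hmono', hsum'⟩
    have hs : s = 1 := by omega
    have hs' : s' = 1 := by omega
    subst hs; subst hs'
    refine ⟨rfl, ?_⟩
    intro i hi; simp at hi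
    subst hi
    rw [Icc_self, sum_singleton, Nat.choose_one_right] at hsum hsum'
    omega
  | succ r hr ih =>
    intro m hm s a s' a' hrep hrep'
    obtain ⟨hs1, hsr, hge, hmono, hsum⟩ := hrep
    obtain ⟨hs1', hsr', hge', hmono', hsum'⟩ := hrep'
    -- top values agree
    have hbound : m < (a (r + 1) + 1).choose (r + 1) := by
      rw [hsum]; exact sum_lt_choose (r + 1) s a hs1 hsr hge hmono
    have hbound' : m < (a' (r + 1) + 1).choose (r + 1) := by
      rw [hsum']; exact sum_lt_choose (r + 1) s' a' hs1' hsr' hge' hmono'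
    have hterm : Nat.choose (a (r + 1)) (r + 1) ≤ m := by
      rw [hsum]
      exact Finset.single_le_sum (f := fun i => Nat.choose (a i) i)
        (fun i _ => Nat.zero_le _) (Finset.mem_Icc.mpr ⟨hsr, le_refl _⟩)
    have hterm' : Nat.choose (a' (r + 1)) (r + 1) ≤ m := by
      rw [hsum']
      exact Finset.single_le_sum (f := fun i => Nat.choose (a' i) i)
        (fun i _ => Nat.zero_le _) (Finset.mem_Icc.mpr ⟨hsr', le_refl _⟩)
    have hge1 : r + 1 ≤ a (r + 1) := hge (r + 1) (Finset.mem_Icc.mpr ⟨hsr, le_refl _⟩)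
    have hge1' : r + 1 ≤ a' (r + 1) := hge' (r + 1) (Finset.mem_Icc.mpr ⟨hsr', le_refl _⟩)
    have htop : a (r + 1) = a' (r + 1) := by
      by_contra hne
      rcases Nat.lt_or_ge (a (r + 1)) (a' (r + 1)) with h | h
      · have : (a (r + 1) + 1).choose (r + 1) ≤ (a' (r + 1)).choose (r + 1) :=
          Nat.choose_mono _ (by omega)
        omega
      · have hlt : a' (r + 1) < a (r + 1) := by omega
        have : (a' (r + 1) + 1).choose (r + 1) ≤ (a (r + 1)).choose (r + 1) :=
          Nat.choose_mono _ (by omega)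
        omega
    set c := Nat.choose (a (r + 1)) (r + 1) with hc
    have hc' : Nat.choose (a' (r + 1)) (r + 1) = c := by rw [← htop]
    -- split sums
    rcases eq_or_lt_of_le hsr with heq | hlt
    · -- s = r + 1
      have hmc : m = c := by rw [hsum, ← heq, Icc_self, sum_singleton, heq]
      rcases eq_or_lt_of_le hsr' with heq' | hlt'
      · refine ⟨by omega, ?_⟩
        intro i hi; rw [← heq] at hi; simp at hi; rw [hi, heq]; exact htop
      · exfalso
        rw [Finset.sum_Icc_succ_top (show s' ≤ r + 1 by omega)] at hsum'
        have hpos : 0 < ∑ i ∈ Icc s' r, Nat.choose (a' i) i := by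
          have h1 : Nat.choose (a' s') s' ≤ ∑ i ∈ Icc s' r, Nat.choose (a' i) i :=
            Finset.single_le_sum (f := fun i => Nat.choose (a' i) i) (fun i _ => Nat.zero_le _)
              (Finset.mem_Icc.mpr ⟨le_refl _, by omega⟩)
          have h2 : 0 < Nat.choose (a' s') s' :=
            Nat.choose_pos (hge' s' (Finset.mem_Icc.mpr ⟨le_refl _, by omega⟩))
          omega
        omega
    · rcases eq_or_lt_of_le hsr' with heq' | hlt'
      · exfalso
        have hmc : m = c := by rw [hsum', ← heq', Icc_self, sum_singleton, heq', hc']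
        rw [Finset.sum_Icc_succ_top (show s ≤ r + 1 by omega)] at hsum
        have hpos : 0 < ∑ i ∈ Icc s r, Nat.choose (a i) i := by
          have h1 : Nat.choose (a s) s ≤ ∑ i ∈ Icc s r, Nat.choose (a i) i :=
            Finset.single_le_sum (f := fun i => Nat.choose (a i) i) (fun i _ => Nat.zero_le _)
              (Finset.mem_Icc.mpr ⟨le_refl _, by omega⟩)
          have h2 : 0 < Nat.choose (a s) s :=
            Nat.choose_pos (hge s (Finset.mem_Icc.mpr ⟨le_refl _, by omega⟩))
          omega
        omega
      · -- both continue below r + 1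
        rw [Finset.sum_Icc_succ_top (show s ≤ r + 1 by omega)] at hsum
        rw [Finset.sum_Icc_succ_top (show s' ≤ r + 1 by omega)] at hsum'
        set m'' := ∑ i ∈ Icc s r, Nat.choose (a i) i with hm''
        have hm''eq : ∑ i ∈ Icc s' r, Nat.choose (a' i) i = m'' := by omega
        have hm''pos : 0 < m'' := by
          have h1 : Nat.choose (a s) s ≤ m'' :=
            Finset.single_le_sum (f := fun i => Nat.choose (a i) i) (fun i _ => Nat.zero_le _)
              (Finset.mem_Icc.mpr ⟨le_refl _, by omega⟩)
          have h2 : 0 < Nat.choose (a s) s :=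
            Nat.choose_pos (hge s (Finset.mem_Icc.mpr ⟨le_refl _, by omega⟩))
          omega
        have hrep1 : CascadeRep r s a m'' :=
          ⟨hs1, by omega, fun i hi => hge i (by simp at hi ⊢; omega),
            fun i hi j hj hij => hmono i (by simp at hi ⊢; omega) j (by simp at hj ⊢; omega) hij,
            rfl⟩
        have hrep2 : CascadeRep r s' a' m'' :=
          ⟨hs1', by omega, fun i hi => hge' i (by simp at hi ⊢; omega),
            fun i hi j hj hij => hmono' i (by simp at hi ⊢; omega) j (by simp at hj ⊢; omega) hij,
            hm''eq.symm⟩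
        obtain ⟨hss, hall⟩ := ih m'' hm''pos s a s' a' hrep1 hrep2
        refine ⟨hss, ?_⟩
        intro i hi; simp at hi
        by_cases h : i = r + 1
        · rw [h]; exact htop
        · exact hall i (Finset.mem_Icc.mpr ⟨by omega, by omega⟩)

/-- Existence and uniqueness of the `r`-cascade notation
`m = C(a_r, r) + ⋯ + C(a_s, s)` with `r ≥ s ≥ 1`, `a_r > ⋯ > a_s > 0`, `a_i ≥ i`. -/
theorem stmt5 (m r : ℕ) (hm : 0 < m) (hr : 1 ≤ r) :
    ∃ (s : ℕ) (a : ℕ → ℕ),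
      (1 ≤ s ∧ s ≤ r ∧ 0 < a s ∧ (∀ i ∈ Finset.Icc s r, i ≤ a i) ∧
        (∀ i ∈ Finset.Icc s r, ∀ j ∈ Finset.Icc s r, i < j → a i < a j) ∧
        m = ∑ i ∈ Finset.Icc s r, Nat.choose (a i) i) ∧
      ∀ (s' : ℕ) (a' : ℕ → ℕ),
        (1 ≤ s' ∧ s' ≤ r ∧ 0 < a' s' ∧ (∀ i ∈ Finset.Icc s' r, i ≤ a' i) ∧
          (∀ i ∈ Finset.Icc s' r, ∀ j ∈ Finset.Icc s' r, i < j → a' i < a' j) ∧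
          m = ∑ i ∈ Finset.Icc s' r, Nat.choose (a' i) i) →
        s' = s ∧ ∀ i ∈ Finset.Icc s r, a' i = a i := by
  obtain ⟨s, a, hs1, hsr, hge, hmono, hsum⟩ := exists_rep r hr m hm
  refine ⟨s, a, ⟨hs1, hsr, ?_, hge, hmono, hsum⟩, ?_⟩
  · have := hge s (by simp; omega); omega
  · rintro s' a' ⟨hs1', hsr', _, hge', hmono', hsum'⟩
    obtain ⟨hss, hall⟩ := unique_rep r hr m hm s' a' s a
      ⟨hs1', hsr', hge', hmono', hsum'⟩ ⟨hs1, hsr, hge, hmono, hsum⟩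
    exact ⟨hss, fun i hi => hall i (by rwa [hss])⟩
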